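/- Let H be a bialgebra over a commutative ring R and π an n×n matrix with entries in H satisfying Δ(π_{ij}) = Σ_k π_{ik} ⊗ π_{kj} and ε(π_{ij}) = δ_{ij}, invertible as a matrix over H. Define Δ_R : H^n → (H ⊗ H)^n by (Δ_R v)_j = Σ_i Δ(b_i) · (π_{ij} ⊗ 1), where b_i = Σ_k v_k (π⁻¹)_{ki}. Then Δ_R is a right H-comodule structure on H^n: (id ⊗ ε) ∘ Δ_R = id (identifying H ⊗ R ≅ H componentwise) and (Δ_R ⊗ id_H) ∘ Δ_R = (id ⊗ Δ) ∘ Δ_R as maps H^n → (H ⊗ H ⊗ H)^n. -/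
import Mathlib
open TensorProduct

section helpers
variable {R H : Type*} [CommRing R] [Ring H] [Bialgebra R H]

lemma lem1 (y : H) (x : H ⊗[R] H) :
    (TensorProduct.rid R H) ((LinearMap.lTensor H (Coalgebra.counit (R := R)))
      (LinearMap.mulRight R (y ⊗ₜ[R] (1:H)) x)) =
    ((TensorProduct.rid R H) ((LinearMap.lTensor H (Coalgebra.counit (R := R))) x)) * y := by
  induction x using TensorProduct.induction_on with
  | zero => simp
  | tmul a b => simp [Algebra.TensorProduct.tmul_mul_tmul, smul_mul_assoc]
  | add a b ha hb => simp only [LinearMap.mulRight_apply] at ha hb ⊢; rw [add_mul]; simp [ha, hb, add_mul]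

lemma lemA (f : H →ₗ[R] H ⊗[R] H) (c : H) (x : H ⊗[R] H) :
    LinearMap.rTensor H f (LinearMap.mulRight R (c ⊗ₜ[R] (1:H)) x) =
    LinearMap.rTensor H (f ∘ₗ LinearMap.mulRight R c) x := by
  induction x using TensorProduct.induction_on with
  | zero => simp
  | tmul a b => simp [Algebra.TensorProduct.tmul_mul_tmul]
  | add a b ha hb => simp only [LinearMap.mulRight_apply] at ha hb ⊢; rw [add_mul]; simp [ha, hb, add_mul]

lemma lemBC0 (a c : H) (t : H ⊗[R] H) :
    (TensorProduct.assoc R H H H).symm ((a * c) ⊗ₜ[R] t) =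
    (TensorProduct.assoc R H H H).symm (a ⊗ₜ[R] t) * ((c ⊗ₜ[R] (1:H)) ⊗ₜ[R] (1:H)) := by
  induction t using TensorProduct.induction_on with
  | zero => rw [tmul_zero, tmul_zero, LinearEquiv.map_zero, zero_mul]
  | tmul b d => simp [Algebra.TensorProduct.tmul_mul_tmul]
  | add s t hs ht => simp only [tmul_add, map_add, hs, ht, add_mul]

lemma lemBC (c : H) (x : H ⊗[R] H) :
    (TensorProduct.assoc R H H H).symm ((LinearMap.lTensor H (Coalgebra.comul (R := R)))
      (LinearMap.mulRight R (c ⊗ₜ[R] (1:H)) x)) =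
    (TensorProduct.assoc R H H H).symm
      ((LinearMap.lTensor H (Coalgebra.comul (R := R))) x) * ((c ⊗ₜ[R] (1:H)) ⊗ₜ[R] (1:H)) := by
  induction x using TensorProduct.induction_on with
  | zero => simp
  | tmul a b => simp [Algebra.TensorProduct.tmul_mul_tmul, lemBC0]
  | add s t hs ht =>
      simp only [LinearMap.mulRight_apply] at hs ht ⊢
      rw [add_mul]; simp [hs, ht, add_mul]

lemma lemD (c : H) (x : (H ⊗[R] H) ⊗[R] H) :
    LinearMap.rTensor H (LinearMap.mulRight R (c ⊗ₜ[R] (1:H))) x =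
      x * ((c ⊗ₜ[R] (1:H)) ⊗ₜ[R] (1:H)) := by
  induction x using TensorProduct.induction_on with
  | zero => simp
  | tmul a b => simp [Algebra.TensorProduct.tmul_mul_tmul]
  | add s t hs ht => simp [hs, ht, add_mul]

lemma lemS1 (c x : H) :
    LinearMap.rTensor H (LinearMap.mulRight R (c ⊗ₜ[R] (1:H)) ∘ₗ Coalgebra.comul)
      (Coalgebra.comul (R := R) x) =
    (TensorProduct.assoc R H H H).symm ((LinearMap.lTensor H (Coalgebra.comul (R := R)))
      (LinearMap.mulRight R (c ⊗ₜ[R] (1:H)) (Coalgebra.comul (R := R) x))) := by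
  rw [lemBC, Coalgebra.coassoc_symm_apply, LinearMap.rTensor_comp, LinearMap.comp_apply, lemD]

lemma rT_sum {ι : Type*} (s : Finset ι) (m : ι → H) (c : H ⊗[R] H) (y : H ⊗[R] H) :
    ∑ k ∈ s, LinearMap.rTensor H
        (LinearMap.mulRight R c ∘ₗ Coalgebra.comul ∘ₗ LinearMap.mulRight R (m k)) y
    = LinearMap.rTensor H
        (LinearMap.mulRight R c ∘ₗ Coalgebra.comul ∘ₗ LinearMap.mulRight R (∑ k ∈ s, m k)) y := by
  classical
  induction s using Finset.induction_on with
  | empty => simp [LinearMap.mulRight_zero_eq_zero, LinearMap.rTensor_zero]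
  | @insert a s hx ih =>
      rw [Finset.sum_insert hx, Finset.sum_insert hx, ih]
      have : LinearMap.mulRight R (m a + ∑ k ∈ s, m k) =
        LinearMap.mulRight R (m a) + LinearMap.mulRight R (∑ k ∈ s, m k) := by
        ext z; simp [mul_add]
      rw [this]
      simp [LinearMap.comp_add, LinearMap.add_comp, LinearMap.rTensor_add]

end helpers

/-- The building block of the right coaction on one-forms: the linear map
`H →ₗ H ⊗ H` sending `x` to `Δ(x · π'_{ki}) · (π_{ij} ⊗ 1)`. -/
noncomputable def Amap (R H : Type*) [CommRing R] [Ring H] [Bialgebra R H] {n : ℕ}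
    (π π' : Matrix (Fin n) (Fin n) H) (j i k : Fin n) : H →ₗ[R] H ⊗[R] H :=
  (LinearMap.mulRight R ((π i j) ⊗ₜ[R] (1 : H))) ∘ₗ
    Coalgebra.comul ∘ₗ (LinearMap.mulRight R (π' k i))

/-- The right coaction `Δ_R` on the one-forms `H^n`:
`(Δ_R v)_j = Σ_i Δ(b_i) · (π_{ij} ⊗ 1)` where `b_i = Σ_k v_k (π⁻¹)_{ki}`. -/
noncomputable def deltaR (R H : Type*) [CommRing R] [Ring H] [Bialgebra R H] {n : ℕ}
    (π π' : Matrix (Fin n) (Fin n) H) (v : Fin n → H) : Fin n → H ⊗[R] H :=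
  fun j => ∑ i, ∑ k, Amap R H π π' j i k (v k)

/-- `Δ_R` is a right `H`-comodule structure on `H^n`:
`(id ⊗ ε) ∘ Δ_R = id` (identifying `H ⊗ R ≅ H` componentwise) and
`(Δ_R ⊗ id) ∘ Δ_R = (id ⊗ Δ) ∘ Δ_R` (componentwise in `(H ⊗ H ⊗ H)^n`). -/
theorem deltaR_comodule (R H : Type*) [CommRing R] [Ring H] [Bialgebra R H] {n : ℕ}
    (π π' : Matrix (Fin n) (Fin n) H)
    (hπ : ∀ a b, Coalgebra.comul (R := R) (π a b) = ∑ c, π a c ⊗ₜ[R] π c b)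
    (hε : ∀ a b, Coalgebra.counit (R := R) (π a b) = if a = b then (1 : R) else 0)
    (hππ' : π * π' = 1) (hπ'π : π' * π = 1) :
    (∀ (v : Fin n → H) (j : Fin n),
      (TensorProduct.rid R H)
        ((LinearMap.lTensor H (Coalgebra.counit (R := R) (A := H)))
          (deltaR R H π π' v j)) = v j) ∧
    (∀ (v : Fin n → H) (j : Fin n),
      ∑ i, ∑ k, (LinearMap.rTensor H (Amap R H π π' j i k)) (deltaR R H π π' v k) =
        (TensorProduct.assoc R H H H).symm
          ((LinearMap.lTensor H (Coalgebra.comul (R := R) (A := H)))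
            (deltaR R H π π' v j))) := by
  constructor
  · intro v j
    have step : ∀ i k : Fin n,
        (TensorProduct.rid R H) ((LinearMap.lTensor H (Coalgebra.counit (R := R) (A := H)))
          (Amap R H π π' j i k (v k))) = v k * π' k i * π i j := by
      intro i k
      have h1 : Amap R H π π' j i k (v k) =
          LinearMap.mulRight R ((π i j) ⊗ₜ[R] (1:H))
            (Coalgebra.comul (R := R) (v k * π' k i)) := rfl
      rw [h1, lem1, Coalgebra.lTensor_counit_comul]
      simp
    rw [deltaR]
    simp only [map_sum, step]
    rw [Finset.sum_comm]
    have h2 : ∀ k : Fin n, (∑ i, v k * π' k i * π i j) = v k * ((π' * π) k j) := by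
      intro k
      rw [Matrix.mul_apply, Finset.mul_sum]
      simp [mul_assoc]
    simp only [h2, hπ'π, Matrix.one_apply]
    simp
  · intro v j
    have key2 : ∀ i : Fin n,
        (∑ k, LinearMap.rTensor H (Amap R H π π' j i k) (deltaR R H π π' v k)) =
        ∑ p, ∑ q, LinearMap.rTensor H
          (LinearMap.mulRight R ((π i j) ⊗ₜ[R] (1:H)) ∘ₗ Coalgebra.comul ∘ₗ
            LinearMap.mulRight R ((π * π') p i))
          (Coalgebra.comul (R := R) (v q * π' q p)) := by
      intro i
      have key : ∀ k : Fin n,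
          LinearMap.rTensor H (Amap R H π π' j i k) (deltaR R H π π' v k) =
          ∑ p, ∑ q, LinearMap.rTensor H
            (LinearMap.mulRight R ((π i j) ⊗ₜ[R] (1:H)) ∘ₗ Coalgebra.comul ∘ₗ
              LinearMap.mulRight R (π p k * π' k i))
            (Coalgebra.comul (R := R) (v q * π' q p)) := by
        intro k
        rw [deltaR, map_sum]
        refine Finset.sum_congr rfl fun p _ => ?_
        rw [map_sum]
        refine Finset.sum_congr rfl fun q _ => ?_
        have h1 : Amap R H π π' k p q (v q) =
            LinearMap.mulRight R ((π p k) ⊗ₜ[R] (1:H))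
              (Coalgebra.comul (R := R) (v q * π' q p)) := rfl
        rw [h1, lemA]
        congr 1
        rw [Amap, LinearMap.mulRight_mul]
        rfl
      simp only [key]
      rw [Finset.sum_comm]
      refine Finset.sum_congr rfl fun p _ => ?_
      rw [Finset.sum_comm]
      refine Finset.sum_congr rfl fun q _ => ?_
      rw [rT_sum, ← Matrix.mul_apply]
    have key3 : ∀ i : Fin n,
        (∑ p, ∑ q, LinearMap.rTensor H
          (LinearMap.mulRight R ((π i j) ⊗ₜ[R] (1:H)) ∘ₗ Coalgebra.comul ∘ₗ
            LinearMap.mulRight R ((π * π') p i))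
          (Coalgebra.comul (R := R) (v q * π' q p))) =
        ∑ q, LinearMap.rTensor H
          (LinearMap.mulRight R ((π i j) ⊗ₜ[R] (1:H)) ∘ₗ Coalgebra.comul)
          (Coalgebra.comul (R := R) (v q * π' q i)) := by
      intro i
      rw [Finset.sum_comm]
      refine Finset.sum_congr rfl fun q _ => ?_
      have h3 : ∀ p : Fin n, LinearMap.rTensor H
          (LinearMap.mulRight R ((π i j) ⊗ₜ[R] (1:H)) ∘ₗ Coalgebra.comul ∘ₗ
            LinearMap.mulRight R ((π * π') p i))
          (Coalgebra.comul (R := R) (v q * π' q p)) =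
          if p = i then LinearMap.rTensor H
            (LinearMap.mulRight R ((π i j) ⊗ₜ[R] (1:H)) ∘ₗ Coalgebra.comul)
            (Coalgebra.comul (R := R) (v q * π' q i)) else 0 := by
        intro p
        rw [hππ', Matrix.one_apply]
        by_cases h : p = i
        · subst h
          simp [LinearMap.mulRight_one]
        · simp [h, LinearMap.mulRight_zero_eq_zero, LinearMap.rTensor_zero]
      simp only [h3]
      simp
    have rhs : (TensorProduct.assoc R H H H).symm
        ((LinearMap.lTensor H (Coalgebra.comul (R := R) (A := H)))
          (deltaR R H π π' v j)) =
        ∑ i, ∑ k, LinearMap.rTensor H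
          (LinearMap.mulRight R ((π i j) ⊗ₜ[R] (1:H)) ∘ₗ Coalgebra.comul)
          (Coalgebra.comul (R := R) (v k * π' k i)) := by
      rw [deltaR]
      simp only [map_sum]
      refine Finset.sum_congr rfl fun i _ => Finset.sum_congr rfl fun k _ => ?_
      have h1 : Amap R H π π' j i k (v k) =
          LinearMap.mulRight R ((π i j) ⊗ₜ[R] (1:H))
            (Coalgebra.comul (R := R) (v k * π' k i)) := rfl
      rw [h1, ← lemS1]
    rw [rhs]
    exact Finset.sum_congr rfl fun i _ => (key2 i).trans (key3 i)
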